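/- Let A be compact, convex, with differentiable boundary and 0 ∈ int(A), and let y ∈ ∂_V(p_V(A)). If x ∈ ∂A satisfies p_V(x) = y, then for every v ∈ V^⊥ the line span(v) + {x} does not meet int(A). -/

import Mathlib

open scoped RealInnerProductSpace Pointwise

theorem fiber_point_lines_miss_interior
    {E : Type*} [NormedAddCommGroup E] [InnerProductSpace ℝ E] [FiniteDimensional ℝ E]
    (A : Set E) (hcpt : IsCompact A) (hconv : Convex ℝ A)
    (h0 : (0 : E) ∈ interior A)
    (hC1 : ContDiffOn ℝ 1 (gauge A) {0}ᶜ)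
    (V : Submodule ℝ E) (hV : V ≠ ⊥)
    (y : V) (hy : y ∈ frontier ((V.orthogonalProjectionOnto) '' A))
    (x : E) (hx : x ∈ frontier A) (hxy : V.orthogonalProjectionOnto x = y) :
    ∀ v ∈ Vᗮ, (((Submodule.span ℝ {v} : Set E) + ({x} : Set E)) ∩ interior A) = ∅ := by
  intro v hv
  ext z
  simp only [Set.mem_inter_iff, Set.mem_empty_iff_false, iff_false, not_and]
  rintro ⟨a, ha, b, hb, rfl⟩ hz
  rcases Set.mem_singleton_iff.mp hb with rfl
  -- a ∈ Vᗮ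
  have haV : a ∈ Vᗮ := Submodule.span_le.mpr (Set.singleton_subset_iff.mpr hv) ha
  have hproj : V.orthogonalProjectionOnto (a + b) = y := by
    rw [map_add, Submodule.orthogonalProjectionOnto_apply_of_mem_orthogonal haV,
      zero_add, hxy]
  -- projection is an open map
  have hsurj : Function.Surjective (V.orthogonalProjectionOnto) := fun w =>
    ⟨(w : E), by simp⟩
  have hopen : IsOpenMap (V.orthogonalProjectionOnto) :=
    (V.orthogonalProjectionOnto).isOpenMap hsurj
  have hsub : (V.orthogonalProjectionOnto) '' interior A ⊆
      interior ((V.orthogonalProjectionOnto) '' A) :=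
    interior_maximal (Set.image_mono interior_subset) (hopen _ isOpen_interior)
  have : y ∈ interior ((V.orthogonalProjectionOnto) '' A) :=
    hsub ⟨a + b, hz, hproj⟩
  exact hy.2 this
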